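/- Let ℬ ≤ M(n,ℂ) be a non-trivial irreducible matrix Lie algebra, i.e., the only subspaces U ≤ ℂⁿ with ℬ(U) ⊆ U are 0 and ℂⁿ, and ℬ is not the zero subspace of M(1,ℂ). Then ℬ does not have a shrunk subspace: for every subspace U ≤ ℂⁿ, dim(ℬ(U)) ≥ dim(U). -/

import Mathlib

/-- The image `ℬ(U)` of a subspace `U ≤ ℂⁿ` under a matrix space `ℬ ≤ M(n,ℂ)`. -/
noncomputable def matImage {n : ℕ} (ℬ : Submodule ℂ (Matrix (Fin n) (Fin n) ℂ))
    (U : Submodule ℂ (Fin n → ℂ)) : Submodule ℂ (Fin n → ℂ) :=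
  Submodule.span ℂ {v | ∃ B ∈ ℬ, ∃ u ∈ U, v = B.mulVec u}

open NormedSpace Module

section ExpLemmas

variable {E : Type*} [NormedRing E] [NormedAlgebra ℂ E] [CompleteSpace E]

set_option linter.unusedSectionVars false

lemma aux_exp_add_of_commute {x y : E} (hxy : Commute x y) : exp (x + y) = exp x * exp y :=
  exp_add_of_commute_of_mem_ball (𝕂 := ℂ) hxy
    ((expSeries_radius_eq_top ℂ E).symm ▸ edist_lt_top _ _)
    ((expSeries_radius_eq_top ℂ E).symm ▸ edist_lt_top _ _)

lemma aux_mulLeft_pow_apply (X : E) (k : ℕ) : ∀ A : E,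
    ((ContinuousLinearMap.mul ℂ E X) ^ k) A = X ^ k * A := by
  induction k with
  | zero => intro A; simp
  | succ k ih =>
      intro A
      rw [pow_succ, ContinuousLinearMap.mul_apply, ContinuousLinearMap.mul_apply', ih (X * A),
        pow_succ, mul_assoc]

lemma aux_mulRight_pow_apply (Y : E) (k : ℕ) : ∀ A : E,
    (((ContinuousLinearMap.mul ℂ E).flip Y ^ k)) A = A * Y ^ k := by
  induction k with
  | zero => intro A; simp
  | succ k ih =>
      intro A
      rw [pow_succ, ContinuousLinearMap.mul_apply]
      simp only [ContinuousLinearMap.flip_apply, ContinuousLinearMap.mul_apply']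
      rw [ih (A * Y), pow_succ', ← mul_assoc]

lemma aux_exp_mulLeft_apply (X A : E) :
    exp (ContinuousLinearMap.mul ℂ E X) A = exp X * A := by
  have h1 : HasSum (fun k => (((Nat.factorial k : ℂ))⁻¹ • X ^ k) * A) (exp X * A) :=
    (exp_series_hasSum_exp' (𝕂 := ℂ) X).mapL ((ContinuousLinearMap.mul ℂ E).flip A)
  have h2 : HasSum (fun k => ((Nat.factorial k : ℂ))⁻¹ • ((ContinuousLinearMap.mul ℂ E X) ^ k))
      (exp (ContinuousLinearMap.mul ℂ E X)) := exp_series_hasSum_exp' _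
  have h3 := h2.mapL (ContinuousLinearMap.apply ℂ E A)
  simp only [ContinuousLinearMap.apply_apply, ContinuousLinearMap.coe_smul', Pi.smul_apply,
    aux_mulLeft_pow_apply] at h3
  refine h3.unique ?_
  simpa [smul_mul_assoc] using h1

lemma aux_exp_mulRight_apply (Y A : E) :
    exp ((ContinuousLinearMap.mul ℂ E).flip Y) A = A * exp Y := by
  have h1 : HasSum (fun k => A * (((Nat.factorial k : ℂ))⁻¹ • Y ^ k)) (A * exp Y) :=
    (exp_series_hasSum_exp' (𝕂 := ℂ) Y).mapL (ContinuousLinearMap.mul ℂ E A)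
  have h2 := (exp_series_hasSum_exp' (𝕂 := ℂ) ((ContinuousLinearMap.mul ℂ E).flip Y)).mapL
    (ContinuousLinearMap.apply ℂ E A)
  simp only [ContinuousLinearMap.apply_apply, ContinuousLinearMap.coe_smul', Pi.smul_apply,
    aux_mulRight_pow_apply] at h2
  refine h2.unique ?_
  simpa [mul_smul_comm] using h1

/-- Conjugation by `exp X` preserves a closed subspace that is closed under brackets. -/
lemma aux_exp_conj_mem (𝔅 : Submodule ℂ E) (hcl : IsClosed (𝔅 : Set E))
    (hb : ∀ A ∈ 𝔅, ∀ B ∈ 𝔅, A * B - B * A ∈ 𝔅)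
    {X : E} (hX : X ∈ 𝔅) {A : E} (hA : A ∈ 𝔅) :
    exp X * A * exp (-X) ∈ 𝔅 := by
  set Lx := ContinuousLinearMap.mul ℂ E X with hLx
  set Rx := (ContinuousLinearMap.mul ℂ E).flip X with hRx
  set D := Lx - Rx with hD
  have hDmem : ∀ k, ∀ C ∈ 𝔅, (D ^ k) C ∈ 𝔅 := by
    intro k
    induction k with
    | zero => intro C hC; simpa using hC
    | succ k ih =>
        intro C hC
        rw [pow_succ, ContinuousLinearMap.mul_apply]
        have : D C = X * C - C * X := by
          simp [hD, hLx, hRx, ContinuousLinearMap.sub_apply]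
        exact ih _ (this ▸ hb X hX C hC)
  have hsum : HasSum (fun k => ((Nat.factorial k : ℂ))⁻¹ • ((D ^ k) A)) (exp D A) := by
    have h2 := (exp_series_hasSum_exp' (𝕂 := ℂ) D).mapL (ContinuousLinearMap.apply ℂ E A)
    simpa using h2
  have hmem : exp D A ∈ 𝔅 := by
    refine hcl.mem_of_tendsto hsum.tendsto_sum_nat (Filter.Eventually.of_forall fun N => ?_)
    exact Submodule.sum_mem _ fun k _ => Submodule.smul_mem _ _ (hDmem k A hA)
  have hcomm : Commute Lx (-Rx) := by
    apply Commute.neg_right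
    refine ContinuousLinearMap.ext fun C => ?_
    simp only [ContinuousLinearMap.mul_apply, hLx, hRx, ContinuousLinearMap.flip_apply,
      ContinuousLinearMap.mul_apply', mul_assoc]
  have hsplit : exp D = exp Lx * exp (-Rx) := by
    rw [hD, sub_eq_add_neg, aux_exp_add_of_commute hcomm]
  have hRneg : -Rx = (ContinuousLinearMap.mul ℂ E).flip (-X) := by simp [hRx]
  have heq : exp D A = exp X * A * exp (-X) := by
    rw [hsplit, ContinuousLinearMap.mul_apply, hRneg, aux_exp_mulRight_apply,
      aux_exp_mulLeft_apply, mul_assoc]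
  rwa [heq] at hmem

lemma aux_exp_mul_exp_neg (X : E) : exp X * exp (-X) = 1 := by
  rw [← aux_exp_add_of_commute (Commute.neg_right (Commute.refl X)), add_neg_cancel, exp_zero]

end ExpLemmas

section MatImageLemmas

variable {n : ℕ}

/-- matrices acting on vectors, as continuous linear maps -/
noncomputable def eMat (n : ℕ) :
    Matrix (Fin n) (Fin n) ℂ ≃ₗ[ℂ] ((Fin n → ℂ) →L[ℂ] (Fin n → ℂ)) :=
  Matrix.toLin'.trans LinearMap.toContinuousLinearMap

@[simp] lemma eMat_apply (A : Matrix (Fin n) (Fin n) ℂ) (v : Fin n → ℂ) :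
    eMat n A v = A.mulVec v := by
  simp [eMat, Matrix.toLin'_apply]

lemma eMat_mul (A B : Matrix (Fin n) (Fin n) ℂ) :
    eMat n (A * B) = eMat n A * eMat n B := by
  refine ContinuousLinearMap.ext fun v => ?_
  simp [ContinuousLinearMap.mul_apply, Matrix.mulVec_mulVec]

lemma matImage_le_iff (ℬ : Submodule ℂ (Matrix (Fin n) (Fin n) ℂ))
    (U W : Submodule ℂ (Fin n → ℂ)) :
    matImage ℬ U ≤ W ↔ ∀ B ∈ ℬ, ∀ u ∈ U, B.mulVec u ∈ W := by
  rw [matImage, Submodule.span_le]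
  constructor
  · intro h B hB u hu; exact h ⟨B, hB, u, hu, rfl⟩
  · rintro h v ⟨B, hB, u, hu, rfl⟩; exact h B hB u hu

lemma mulVec_mem_matImage {ℬ : Submodule ℂ (Matrix (Fin n) (Fin n) ℂ)}
    {U : Submodule ℂ (Fin n → ℂ)} {B : Matrix (Fin n) (Fin n) ℂ} {u : Fin n → ℂ}
    (hB : B ∈ ℬ) (hu : u ∈ U) : B.mulVec u ∈ matImage ℬ U :=
  Submodule.subset_span ⟨B, hB, u, hu, rfl⟩

lemma matImage_mono {ℬ : Submodule ℂ (Matrix (Fin n) (Fin n) ℂ)}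
    {U U' : Submodule ℂ (Fin n → ℂ)} (h : U ≤ U') : matImage ℬ U ≤ matImage ℬ U' :=
  Submodule.span_mono (by rintro v ⟨B, hB, u, hu, rfl⟩; exact ⟨B, hB, u, h hu, rfl⟩)

lemma matImage_bot (ℬ : Submodule ℂ (Matrix (Fin n) (Fin n) ℂ)) : matImage ℬ ⊥ = ⊥ := by
  rw [← le_bot_iff, matImage_le_iff]
  rintro B hB u hu
  rw [Submodule.mem_bot] at hu
  simp [hu]

lemma matImage_sup (ℬ : Submodule ℂ (Matrix (Fin n) (Fin n) ℂ))
    (U W : Submodule ℂ (Fin n → ℂ)) :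
    matImage ℬ (U ⊔ W) = matImage ℬ U ⊔ matImage ℬ W := by
  apply le_antisymm
  · rw [matImage_le_iff]
    intro B hB u hu
    obtain ⟨x, hx, y, hy, rfl⟩ := Submodule.mem_sup.mp hu
    rw [Matrix.mulVec_add]
    exact Submodule.add_mem _ (Submodule.mem_sup_left (mulVec_mem_matImage hB hx))
      (Submodule.mem_sup_right (mulVec_mem_matImage hB hy))
  · exact sup_le (matImage_mono le_sup_left) (matImage_mono le_sup_right)

lemma matImage_inf_le (ℬ : Submodule ℂ (Matrix (Fin n) (Fin n) ℂ))
    (U W : Submodule ℂ (Fin n → ℂ)) :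
    matImage ℬ (U ⊓ W) ≤ matImage ℬ U ⊓ matImage ℬ W :=
  le_inf (matImage_mono inf_le_left) (matImage_mono inf_le_right)

lemma matImage_map_conj (ℬ : Submodule ℂ (Matrix (Fin n) (Fin n) ℂ))
    (U : Submodule ℂ (Fin n → ℂ)) (P Pinv : (Fin n → ℂ) →L[ℂ] (Fin n → ℂ))
    (hPi : P * Pinv = 1) (hiP : Pinv * P = 1)
    (hconj : ∀ B ∈ ℬ, ∃ C ∈ ℬ, (eMat n C : (Fin n → ℂ) →L[ℂ] (Fin n → ℂ)) = Pinv * eMat n B * P)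
    (hconj' : ∀ B ∈ ℬ, ∃ C ∈ ℬ,
      (eMat n C : (Fin n → ℂ) →L[ℂ] (Fin n → ℂ)) = P * eMat n B * Pinv) :
    matImage ℬ (U.map (P : (Fin n → ℂ) →ₗ[ℂ] (Fin n → ℂ)))
      = (matImage ℬ U).map (P : (Fin n → ℂ) →ₗ[ℂ] (Fin n → ℂ)) := by
  apply le_antisymm
  · rw [matImage_le_iff]
    intro B hB u' hu'
    obtain ⟨u, hu, rfl⟩ := Submodule.mem_map.mp hu'
    obtain ⟨C, hC, hCe⟩ := hconj B hB
    refine Submodule.mem_map.mpr ⟨C.mulVec u, mulVec_mem_matImage hC hu, ?_⟩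
    have h1 : B.mulVec (P u) = (eMat n B * P) u := by
      simp [ContinuousLinearMap.mul_apply]
    have h2 : eMat n B * P = P * (eMat n C) := by
      rw [hCe, ← mul_assoc, ← mul_assoc, hPi, one_mul]
    rw [ContinuousLinearMap.coe_coe, h1, h2]
    simp [ContinuousLinearMap.mul_apply]
  · rw [Submodule.map_le_iff_le_comap, matImage_le_iff]
    intro B hB u hu
    obtain ⟨C, hC, hCe⟩ := hconj' B hB
    refine Submodule.mem_comap.mpr ?_
    have h2 : eMat n C * P = P * eMat n B := by
      rw [hCe, mul_assoc, mul_assoc, hiP, mul_one]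
    have h3 : (P : (Fin n → ℂ) →ₗ[ℂ] (Fin n → ℂ)) (B.mulVec u) = C.mulVec (P u) := by
      have := congrArg (fun f => (f : (Fin n → ℂ) →L[ℂ] (Fin n → ℂ)) u) h2
      simpa [ContinuousLinearMap.mul_apply] using this.symm
    rw [h3]
    exact mulVec_mem_matImage hC (Submodule.mem_map_of_mem hu)

end MatImageLemmas

section Minimizer

variable {n : ℕ}

/-- the discrepancy function whose minimizers are the maximally shrunk subspaces -/
noncomputable def Gfun (ℬ : Submodule ℂ (Matrix (Fin n) (Fin n) ℂ))
    (W : Submodule ℂ (Fin n → ℂ)) : ℤ :=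
  (finrank ℂ (matImage ℬ W) : ℤ) - finrank ℂ W

lemma Gfun_submodular (ℬ : Submodule ℂ (Matrix (Fin n) (Fin n) ℂ))
    (U W : Submodule ℂ (Fin n → ℂ)) :
    Gfun ℬ (U ⊔ W) + Gfun ℬ (U ⊓ W) ≤ Gfun ℬ U + Gfun ℬ W := by
  have h1 : matImage ℬ (U ⊔ W) = matImage ℬ U ⊔ matImage ℬ W := matImage_sup ℬ U W
  have h2 : finrank ℂ (matImage ℬ (U ⊓ W))
      ≤ finrank ℂ (matImage ℬ U ⊓ matImage ℬ W : Submodule ℂ (Fin n → ℂ)) :=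
    Submodule.finrank_mono (matImage_inf_le ℬ U W)
  have h3 : finrank ℂ (matImage ℬ U ⊔ matImage ℬ W : Submodule ℂ (Fin n → ℂ))
      + finrank ℂ (matImage ℬ U ⊓ matImage ℬ W : Submodule ℂ (Fin n → ℂ))
      = finrank ℂ (matImage ℬ U) + finrank ℂ (matImage ℬ W) :=
    Submodule.finrank_sup_add_finrank_inf_eq _ _
  have h4 : finrank ℂ (U ⊔ W : Submodule ℂ (Fin n → ℂ))
      + finrank ℂ (U ⊓ W : Submodule ℂ (Fin n → ℂ)) = finrank ℂ U + finrank ℂ W :=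
    Submodule.finrank_sup_add_finrank_inf_eq _ _
  simp only [Gfun]
  have h1' : (finrank ℂ (matImage ℬ (U ⊔ W)) : ℤ)
      = finrank ℂ (matImage ℬ U ⊔ matImage ℬ W : Submodule ℂ (Fin n → ℂ)) := by rw [h1]
  have h2' : (finrank ℂ (matImage ℬ (U ⊓ W)) : ℤ)
      ≤ finrank ℂ (matImage ℬ U ⊓ matImage ℬ W : Submodule ℂ (Fin n → ℂ)) := by
    exact_mod_cast h2
  have h3' : (finrank ℂ (matImage ℬ U ⊔ matImage ℬ W : Submodule ℂ (Fin n → ℂ)) : ℤ)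
      + finrank ℂ (matImage ℬ U ⊓ matImage ℬ W : Submodule ℂ (Fin n → ℂ))
      = finrank ℂ (matImage ℬ U) + finrank ℂ (matImage ℬ W) := by exact_mod_cast h3
  have h4' : (finrank ℂ (U ⊔ W : Submodule ℂ (Fin n → ℂ)) : ℤ)
      + finrank ℂ (U ⊓ W : Submodule ℂ (Fin n → ℂ)) = finrank ℂ U + finrank ℂ W := by
    exact_mod_cast h4
  linarith [h1']

/-- there is a minimizer of `Gfun` that contains all other minimizers -/
lemma exists_max_minimizer (ℬ : Submodule ℂ (Matrix (Fin n) (Fin n) ℂ)) :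
    ∃ Us : Submodule ℂ (Fin n → ℂ), (∀ W, Gfun ℬ Us ≤ Gfun ℬ W) ∧
      (∀ W, Gfun ℬ W = Gfun ℬ Us → W ≤ Us) := by
  have hGbd : ∀ W : Submodule ℂ (Fin n → ℂ), -(n : ℤ) ≤ Gfun ℬ W := by
    intro W
    have h1 : finrank ℂ W ≤ n := by
      simpa [Module.finrank_fin_fun] using W.finrank_le
    have h2 : (finrank ℂ W : ℤ) ≤ n := by exact_mod_cast h1
    have h3 : (0 : ℤ) ≤ finrank ℂ (matImage ℬ W) := by positivity
    simp only [Gfun]; linarith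
  have hne : (Set.range (Gfun ℬ)).Nonempty := ⟨Gfun ℬ ⊥, ⟨⊥, rfl⟩⟩
  have hbdd : BddBelow (Set.range (Gfun ℬ)) := ⟨-(n : ℤ), by rintro z ⟨W, rfl⟩; exact hGbd W⟩
  set m := sInf (Set.range (Gfun ℬ)) with hm
  obtain ⟨U1, hU1⟩ := Int.csInf_mem hne hbdd
  have hmle : ∀ W, m ≤ Gfun ℬ W := fun W => csInf_le hbdd ⟨W, rfl⟩
  set T : Set ℕ := {k | ∃ W, Gfun ℬ W = m ∧ finrank ℂ W = k} with hT
  have hTne : T.Nonempty := ⟨finrank ℂ U1, U1, hU1, rfl⟩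
  have hTbd : BddAbove T := by
    refine ⟨n, ?_⟩
    rintro k ⟨W, _, rfl⟩
    simpa [Module.finrank_fin_fun] using W.finrank_le
  obtain ⟨Us, hUsm, hUsr⟩ := Nat.sSup_mem hTne hTbd
  have hmax : ∀ W, Gfun ℬ W = m → finrank ℂ W ≤ finrank ℂ Us := by
    intro W hW
    rw [hUsr]
    exact le_csSup hTbd ⟨W, hW, rfl⟩
  refine ⟨Us, fun W => hUsm ▸ hmle W, ?_⟩
  intro W hW
  rw [hUsm] at hW
  have e3 := Gfun_submodular ℬ Us W
  have e4 : Gfun ℬ (Us ⊔ W) = m := by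
    have := hmle (Us ⊓ W)
    have := hmle (Us ⊔ W)
    rw [hUsm, hW] at e3
    omega
  have e5 : Us = Us ⊔ W :=
    Submodule.eq_of_le_of_finrank_le le_sup_left (hmax _ e4)
  exact le_trans le_sup_right e5.ge

end Minimizer

/-- A non-trivial irreducible matrix Lie algebra over `ℂ` has no shrunk subspace. -/
theorem irreducible_matrixLieAlgebra_no_shrunk {n : ℕ}
    (ℬ : Submodule ℂ (Matrix (Fin n) (Fin n) ℂ))
    (hLie : ∀ A ∈ ℬ, ∀ B ∈ ℬ, A * B - B * A ∈ ℬ)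
    (hirr : ∀ U : Submodule ℂ (Fin n → ℂ), matImage ℬ U ≤ U → U = ⊥ ∨ U = ⊤)
    (hnontriv : ¬ (n = 1 ∧ ℬ = ⊥)) :
    ∀ U : Submodule ℂ (Fin n → ℂ), Module.finrank ℂ U ≤ Module.finrank ℂ (matImage ℬ U) := by
  intro U
  by_contra hlt
  push_neg at hlt
  -- `hlt : finrank (matImage ℬ U) < finrank U`
  by_cases hBbot : ℬ = ⊥
  · -- the zero algebra: irreducibility forces n ≤ 1, excluded
    have hmi : ∀ W : Submodule ℂ (Fin n → ℂ), matImage ℬ W = ⊥ := by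
      intro W
      rw [← le_bot_iff, matImage_le_iff]
      intro B hB u hu
      rw [hBbot, Submodule.mem_bot] at hB
      simp [hB]
    rw [hmi U, finrank_bot] at hlt
    have hUn : finrank ℂ U ≤ n := by
      simpa [Module.finrank_fin_fun] using U.finrank_le
    have hn1 : 1 ≤ n := by omega
    rcases Nat.lt_or_ge n 2 with h2 | h2
    · exact hnontriv ⟨by omega, hBbot⟩
    · set i0 : Fin n := ⟨0, by omega⟩ with hi0
      have hv : (Pi.single i0 1 : Fin n → ℂ) ≠ 0 := by
        intro h
        have := congrFun h i0
        simp at this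
      rcases hirr (Submodule.span ℂ {Pi.single i0 1}) (by rw [hmi]; exact bot_le) with h | h
      · exact hv ((Submodule.mem_bot ℂ).mp
          (h ▸ Submodule.mem_span_singleton_self (Pi.single i0 1)))
      · have h1 := finrank_span_singleton (K := ℂ) hv
        rw [h, finrank_top, Module.finrank_fin_fun] at h1
        omega
  · -- main case
    obtain ⟨Us, hUmin, hUmax⟩ := exists_max_minimizer ℬ
    have hmneg : Gfun ℬ Us < 0 := by
      refine lt_of_le_of_lt (hUmin U) ?_
      simp only [Gfun, sub_neg]
      exact_mod_cast hlt
    -- the transported Lie algebra of continuous linear maps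
    set ℬ' : Submodule ℂ ((Fin n → ℂ) →L[ℂ] (Fin n → ℂ)) := ℬ.map (eMat n).toLinearMap with hB'
    have hcl : IsClosed (ℬ' : Set ((Fin n → ℂ) →L[ℂ] (Fin n → ℂ))) :=
      Submodule.closed_of_finiteDimensional ℬ'
    have hb' : ∀ f ∈ ℬ', ∀ g ∈ ℬ', f * g - g * f ∈ ℬ' := by
      rintro _ ⟨A, hA, rfl⟩ _ ⟨B, hB, rfl⟩
      exact ⟨A * B - B * A, hLie A hA B hB, by simp [map_sub, eMat_mul]⟩
    -- invariance of the maximal minimizer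
    have hinv : matImage ℬ Us ≤ Us := by
      rw [matImage_le_iff]
      intro B hB u hu
      -- first: exp (t • B) maps Us into Us, for every t
      have hmap : ∀ t : ℂ, ∀ w ∈ Us, exp (eMat n (t • B)) w ∈ Us := by
        intro t w hw
        set X : (Fin n → ℂ) →L[ℂ] (Fin n → ℂ) := eMat n (t • B) with hX
        have hXmem : X ∈ ℬ' := ⟨t • B, ℬ.smul_mem t hB, rfl⟩
        have hXnmem : -X ∈ ℬ' := Submodule.neg_mem _ hXmem
        set P := exp X with hP
        set Pinv := exp (-X) with hPv
        have hPi : P * Pinv = 1 := aux_exp_mul_exp_neg X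
        have hiP : Pinv * P = 1 := by
          have := aux_exp_mul_exp_neg (-X)
          rwa [neg_neg] at this
        have hconj' : ∀ B' ∈ ℬ, ∃ C ∈ ℬ,
            (eMat n C : (Fin n → ℂ) →L[ℂ] (Fin n → ℂ)) = P * eMat n B' * Pinv := by
          intro B' hB'
          have hmem := aux_exp_conj_mem ℬ' hcl hb' hXmem
            (A := eMat n B') ⟨B', hB', rfl⟩
          obtain ⟨C, hC, hCe⟩ := hmem
          exact ⟨C, hC, hCe⟩
        have hconj : ∀ B' ∈ ℬ, ∃ C ∈ ℬ,
            (eMat n C : (Fin n → ℂ) →L[ℂ] (Fin n → ℂ)) = Pinv * eMat n B' * P := by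
          intro B' hB'
          have hmem := aux_exp_conj_mem ℬ' hcl hb' hXnmem
            (A := eMat n B') ⟨B', hB', rfl⟩
          rw [neg_neg] at hmem
          obtain ⟨C, hC, hCe⟩ := hmem
          exact ⟨C, hC, hCe⟩
        -- the induced linear equivalence
        have hcomp1 : (P : (Fin n → ℂ) →ₗ[ℂ] (Fin n → ℂ)).comp
            (Pinv : (Fin n → ℂ) →ₗ[ℂ] (Fin n → ℂ)) = LinearMap.id := by
          refine LinearMap.ext fun v => ?_
          have := congrArg (fun f => (f : (Fin n → ℂ) →L[ℂ] (Fin n → ℂ)) v) hPi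
          simpa [ContinuousLinearMap.mul_apply] using this
        have hcomp2 : (Pinv : (Fin n → ℂ) →ₗ[ℂ] (Fin n → ℂ)).comp
            (P : (Fin n → ℂ) →ₗ[ℂ] (Fin n → ℂ)) = LinearMap.id := by
          refine LinearMap.ext fun v => ?_
          have := congrArg (fun f => (f : (Fin n → ℂ) →L[ℂ] (Fin n → ℂ)) v) hiP
          simpa [ContinuousLinearMap.mul_apply] using this
        set eP : (Fin n → ℂ) ≃ₗ[ℂ] (Fin n → ℂ) :=
          LinearEquiv.ofLinear (P : (Fin n → ℂ) →ₗ[ℂ] (Fin n → ℂ))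
            (Pinv : (Fin n → ℂ) →ₗ[ℂ] (Fin n → ℂ)) hcomp1 hcomp2 with heP
        have hePc : (eP : (Fin n → ℂ) →ₗ[ℂ] (Fin n → ℂ))
            = (P : (Fin n → ℂ) →ₗ[ℂ] (Fin n → ℂ)) := rfl
        have hmc := matImage_map_conj ℬ Us P Pinv hPi hiP hconj hconj'
        have hr1 : finrank ℂ (Us.map (P : (Fin n → ℂ) →ₗ[ℂ] (Fin n → ℂ))) = finrank ℂ Us := by
          rw [← hePc]; exact LinearEquiv.finrank_map_eq eP Us
        have hr2 : finrank ℂ (matImage ℬ (Us.map (P : (Fin n → ℂ) →ₗ[ℂ] (Fin n → ℂ))))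
            = finrank ℂ (matImage ℬ Us) := by
          rw [hmc, ← hePc]
          exact LinearEquiv.finrank_map_eq eP _
        have hGmap : Gfun ℬ (Us.map (P : (Fin n → ℂ) →ₗ[ℂ] (Fin n → ℂ))) = Gfun ℬ Us := by
          simp only [Gfun, hr1, hr2]
        have hle := hUmax _ hGmap
        exact hle (Submodule.mem_map_of_mem hw)
      -- differentiate at t = 0
      have hsmul : ∀ t : ℂ, t • eMat n B = eMat n (t • B) := fun t => (map_smul (eMat n) t B).symm
      have hd : HasDerivAt (fun t : ℂ => exp (t • eMat n B)) (eMat n B) 0 := by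
        have := hasDerivAt_exp_smul_const (𝕂 := ℂ)
          (𝔸 := (Fin n → ℂ) →L[ℂ] (Fin n → ℂ)) (eMat n B) 0
        have h0 : exp ((0:ℂ) • eMat n B) = 1 := by
          rw [show ((0 : ℂ) • eMat n B) = 0 by ext v; simp, exp_zero]
        simpa [h0] using this
      have hd2 : HasDerivAt (fun t : ℂ => exp (t • eMat n B) u) (eMat n B u) 0 := by
        have := (ContinuousLinearMap.apply ℂ (Fin n → ℂ) u).hasFDerivAt.comp_hasDerivAt 0 hd
        exact this
      have hslope := hasDerivAt_iff_tendsto_slope.mp hd2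
      have hUclosed : IsClosed (Us : Set (Fin n → ℂ)) := Submodule.closed_of_finiteDimensional Us
      have hmem : eMat n B u ∈ Us := by
        refine hUclosed.mem_of_tendsto hslope (Filter.Eventually.of_forall fun t => ?_)
        rw [slope_def_module]
        refine Submodule.smul_mem _ _ (Submodule.sub_mem _ ?_ ?_)
        · rw [hsmul t]; exact hmap t u hu
        · have h0 : exp ((0 : ℂ) • eMat n B) = 1 := by
            rw [show ((0 : ℂ) • eMat n B) = 0 by ext v; simp, exp_zero]
          rw [h0, ContinuousLinearMap.one_apply]
          exact hu
      simpa using hmem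
    -- conclude by irreducibility
    rcases hirr Us hinv with h | h
    · rw [h] at hmneg
      rw [Gfun, matImage_bot] at hmneg
      omega
    · rw [h] at hmneg
      have h2 : (finrank ℂ (matImage ℬ (⊤ : Submodule ℂ (Fin n → ℂ))) : ℤ)
          < finrank ℂ (⊤ : Submodule ℂ (Fin n → ℂ)) := by
        rw [Gfun, sub_neg] at hmneg
        exact hmneg
      have hminv : matImage ℬ (matImage ℬ (⊤ : Submodule ℂ (Fin n → ℂ)))
          ≤ matImage ℬ (⊤ : Submodule ℂ (Fin n → ℂ)) := matImage_mono le_top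
      rcases hirr _ hminv with h3 | h3
      · refine hBbot ((Submodule.eq_bot_iff ℬ).mpr fun B hB => ?_)
        have hz : ∀ v : Fin n → ℂ, B.mulVec v = 0 := by
          intro v
          have := mulVec_mem_matImage hB (Submodule.mem_top (x := v))
          rw [h3] at this
          exact (Submodule.mem_bot ℂ).mp this
        have : eMat n B = 0 := ContinuousLinearMap.ext fun v => by simp [hz v]
        exact (LinearEquiv.map_eq_zero_iff (eMat n)).mp this
      · rw [h3] at h2
        omega
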